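/- If f, g : X^n → X and f ≤_W g (g is at least as wild as f), then there exists h in the clone generated by g and all almost unary functions with f ≤ h pointwise. -/
import Mathlib


open Cardinal

/-- `A` is `(f,a)`-wild. -/
def WildFor {X : Type*} {n : ℕ} (f : (Fin n → X) → X) (A : Set (Fin n)) (a : Fin n → X) : Prop :=
  #{y : X | ∃ x : Fin n → X, (∀ i, i ∉ A → x i = a i) ∧ f x = y} = #X

/-- `A` is `f`-wild: `(f,a)`-wild for some `a`. -/
def Wild {X : Type*} {n : ℕ} (f : (Fin n → X) → X) (A : Set (Fin n)) : Prop :=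
  ∃ a : Fin n → X, WildFor f A a
/-- `f` is almost unary: bounded by a unary function of one fixed coordinate. -/
def AlmostUnary {X : Type*} [LT X] {n : ℕ} (f : (Fin n → X) → X) : Prop :=
  ∃ k : Fin n, ∃ F : X → X, ∀ x : Fin n → X, f x < F (x k)
/-- A clone: a family of sets of finitary operations containing all projections
and closed under composition. -/
structure IsClone {X : Type*} (C : ∀ m : ℕ, Set ((Fin m → X) → X)) : Prop where
  proj : ∀ (m : ℕ) (i : Fin m), (fun x => x i) ∈ C m
  comp : ∀ (m k : ℕ) (f : (Fin m → X) → X) (g : Fin m → ((Fin k → X) → X)),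
    f ∈ C m → (∀ i, g i ∈ C k) → (fun x => f (fun i => g i x)) ∈ C k

/-- `g` is at least as wild as `f`. -/
def LeqW {X : Type*} {n : ℕ} (f g : (Fin n → X) → X) : Prop :=
  ∃ π : Equiv.Perm (Fin n), ∀ A : Set (Fin n), Wild f A → Wild g (π '' A)

/-- Membership in the clone generated by `g` together with all almost unary functions. -/
def InCloneWithU {X : Type*} [LT X] {n k : ℕ} (g : (Fin n → X) → X)
    (f : (Fin k → X) → X) : Prop :=
  ∀ C : ∀ m : ℕ, Set ((Fin m → X) → X), IsClone C →
    (∀ (m : ℕ) (h : (Fin m → X) → X), AlmostUnary h → h ∈ C m) → g ∈ C n → f ∈ C k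

universe u

lemma aux_le_small {X : Type u} [LinearOrder X]
    (hbdd : ∀ s : Set X, BddAbove s ↔ #s < #X) (t : X) :
    #{x : X | x ≤ t} < #X := (hbdd _).mp ⟨t, fun _ hy => hy⟩

lemma aux_exists_gt {X : Type u} [LinearOrder X]
    (hbdd : ∀ s : Set X, BddAbove s ↔ #s < #X) (c : X) : ∃ c', c < c' := by
  have h : ¬ BddAbove (Set.univ : Set X) := by
    rw [hbdd, Cardinal.mk_univ]
    exact lt_irrefl _
  by_contra hcon
  push_neg at hcon
  exact h ⟨c, fun y _ => hcon y⟩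

lemma aux_fun_small {X : Type u} [LinearOrder X] (hinf : ℵ₀ ≤ #X)
    {α : Type u} (hα : #α < #X) : ∀ m : ℕ, #(Fin m → α) < #X := by
  intro m
  induction m with
  | zero =>
    have h1 : #(Fin 0 → α) ≤ 1 := by
      rw [Cardinal.le_one_iff_subsingleton]
      exact ⟨fun a b => funext fun i => i.elim0⟩
    exact lt_of_le_of_lt h1 (lt_of_lt_of_le Cardinal.one_lt_aleph0 hinf)
  | succ m ih =>
    have he : #(Fin (m+1) → α) = #(α × (Fin m → α)) :=
      Cardinal.mk_congr (Fin.consEquiv (fun _ => α)).symm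
    rw [he, Cardinal.mk_prod, Cardinal.lift_id, Cardinal.lift_id]
    exact Cardinal.mul_lt_of_lt hinf hα ih

/-- If `f ≤_W g` then `f` is dominated pointwise by some member of the clone generated
by `g` and all almost unary functions. -/
theorem exists_dominating_of_leqW {X : Type*} [LinearOrder X] [WellFoundedLT X]
    (hreg : (#X).IsRegular) (hbdd : ∀ s : Set X, BddAbove s ↔ #s < #X)
    {n : ℕ} (f g : (Fin n → X) → X) (hfg : LeqW f g) :
    ∃ h : (Fin n → X) → X, InCloneWithU g h ∧ ∀ x, f x ≤ h x := by
  classical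
  obtain ⟨π, hπ⟩ := hfg
  have hinf : ℵ₀ ≤ #X := hreg.aleph0_le
  have hXne : Nonempty X := by
    rw [← Cardinal.mk_ne_zero_iff]
    intro h0
    rw [h0] at hinf
    exact Cardinal.aleph0_ne_zero (le_zero_iff.mp hinf)
  obtain ⟨x₀⟩ := hXne
  obtain ⟨succ, hsucc⟩ := Classical.axiomOfChoice (aux_exists_gt hbdd)
  -- upper bound chooser
  have hub' : ∀ s : Set X, ∃ b : X, #s < #X → ∀ y ∈ s, y ≤ b := by
    intro s
    by_cases hs : #s < #X
    · obtain ⟨b, hb⟩ := (hbdd s).mpr hs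
      exact ⟨b, fun _ y hy => hb hy⟩
    · exact ⟨x₀, fun h => absurd h hs⟩
  choose ub hub using hub'
  -- selector for g-wild sets
  have hsel : ∀ A : Set (Fin n), ∃ (w : Fin n → X) (T : X → Fin n → X),
      Wild g A → ∀ v : X, (∀ i, i ∉ A → T v i = w i) ∧ v ≤ g (T v) := by
    intro A
    by_cases hA : Wild g A
    · obtain ⟨a, ha⟩ := hA
      have hnb : ¬ BddAbove {y : X | ∃ x : Fin n → X,
          (∀ i, i ∉ A → x i = a i) ∧ g x = y} := by
        rw [hbdd]
        intro hlt
        rw [ha] at hlt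
        exact lt_irrefl _ hlt
      have hsel' : ∀ v : X, ∃ x : Fin n → X, (∀ i, i ∉ A → x i = a i) ∧ v < g x := by
        intro v
        by_contra hcon
        push_neg at hcon
        refine hnb ⟨v, ?_⟩
        rintro y ⟨x, hx, rfl⟩
        exact hcon x hx
      choose T hT using hsel'
      exact ⟨a, T, fun _ v => ⟨(hT v).1, le_of_lt (hT v).2⟩⟩
    · exact ⟨fun _ => x₀, fun _ _ => x₀, fun h => absurd h hA⟩
  choose wit T hT using hsel
  -- bound function for non-wild sets
  have hMex : ∀ (B : Set (Fin n)) (t : X), ∃ m : X,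
      ¬ Wild f B → ∀ x : Fin n → X, (∀ i, i ∉ B → x i ≤ t) → f x ≤ m := by
    intro B t
    by_cases hB : Wild f B
    · exact ⟨x₀, fun h => absurd hB h⟩
    · have hsmall : #(⋃ (a : Fin n → {s : X // s ≤ t}),
          {y : X | ∃ x : Fin n → X, (∀ i, i ∉ B → x i = (a i).1) ∧ f x = y}) < #X := by
        refine (Cardinal.card_iUnion_lt_iff_forall_of_isRegular hreg
          (aux_fun_small hinf (aux_le_small hbdd t) n)).mpr ?_
        intro a
        refine lt_of_le_of_ne (Cardinal.mk_set_le _) ?_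
        intro he
        exact hB ⟨fun i => (a i).1, he⟩
      refine ⟨ub _, fun _ x hx => hub _ hsmall _ ?_⟩
      refine Set.mem_iUnion.mpr
        ⟨fun i => if hi : i ∈ B then ⟨t, le_rfl⟩ else ⟨x i, hx i hi⟩, x, fun i hi => ?_, rfl⟩
      simp [hi]
  choose M hM using hMex
  -- case split on wildness of univ
  by_cases hwild : Wild f (Set.univ : Set (Fin n))
  case neg =>
    have hsmall : #({y : X | ∃ x : Fin n → X,
        (∀ i, i ∉ (Set.univ : Set (Fin n)) → x i = x₀) ∧ f x = y}) < #X := by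
      refine lt_of_le_of_ne (Cardinal.mk_set_le _) ?_
      intro he
      exact hwild ⟨fun _ => x₀, he⟩
    refine ⟨fun _ => ub {y : X | ∃ x : Fin n → X,
        (∀ i, i ∉ (Set.univ : Set (Fin n)) → x i = x₀) ∧ f x = y}, ?_, ?_⟩
    · intro C hC hUau hg
      have h1 : AlmostUnary (fun _ : Fin 1 → X => ub {y : X | ∃ x : Fin n → X,
          (∀ i, i ∉ (Set.univ : Set (Fin n)) → x i = x₀) ∧ f x = y}) :=
        ⟨0, fun _ => succ (ub _), fun _ => hsucc _⟩
      exact hC.comp 1 n _ (fun _ => g) (hUau 1 _ h1) (fun _ => hg)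
    · intro x
      exact hub _ hsmall (f x) ⟨x, fun i hi => absurd (Set.mem_univ i) hi, rfl⟩
  case pos =>
    -- sorting permutation (decreasing)
    set τ : (Fin n → X) → Equiv.Perm (Fin n) :=
      fun x => Tuple.sort (fun j => OrderDual.toDual (x j)) with hτdef
    have hmono : ∀ (x : Fin n → X) (j j' : Fin n), j ≤ j' → x (τ x j') ≤ x (τ x j) :=
      fun x j j' h => Tuple.monotone_sort (fun j => OrderDual.toDual (x j)) h
    set P : (Fin n → X) → ℕ → Set (Fin n) :=
      fun x d => (⇑(τ x)) '' {j : Fin n | (j : ℕ) < d} with hPdef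
    have hPn : ∀ x, P x n = Set.univ := by
      intro x
      ext i
      simp only [hPdef, Set.mem_image, Set.mem_setOf_eq, Set.mem_univ, iff_true]
      exact ⟨(τ x).symm i, ((τ x).symm i).isLt, Equiv.apply_symm_apply _ i⟩
    have hex : ∀ x : Fin n → X, ∃ d, Wild f (P x d) :=
      fun x => ⟨n, by rw [hPn]; exact hwild⟩
    set dd : (Fin n → X) → ℕ := fun x => Nat.find (hex x) with hdddef
    have hddW : ∀ x, Wild f (P x (dd x)) := fun x => Nat.find_spec (hex x)
    have hddn : ∀ x, dd x ≤ n := fun x => Nat.find_le (by rw [hPn]; exact hwild)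
    have hdd1 : ∀ x, 1 ≤ dd x := by
      intro x
      rcases Nat.eq_zero_or_pos (dd x) with h0 | h
      · exfalso
        have hW := hddW x
        rw [h0] at hW
        have hP0 : P x 0 = ∅ := by
          simp [hPdef]
        rw [hP0] at hW
        obtain ⟨a, ha⟩ := hW
        have hsub : {y : X | ∃ x' : Fin n → X,
            (∀ i, i ∉ (∅ : Set (Fin n)) → x' i = a i) ∧ f x' = y} ⊆ {f a} := by
          rintro y ⟨x', hx', rfl⟩
          have hxa : x' = a := funext fun i => hx' i (Set.notMem_empty i)
          simp [hxa]
        have hle : #{y : X | ∃ x' : Fin n → X,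
            (∀ i, i ∉ (∅ : Set (Fin n)) → x' i = a i) ∧ f x' = y} ≤ 1 :=
          (Cardinal.mk_le_mk_of_subset hsub).trans_eq (Cardinal.mk_singleton _)
        have h1 : #X ≤ 1 := ha ▸ hle
        exact absurd (h1.trans_lt Cardinal.one_lt_aleph0) (not_lt.mpr hinf)
      · exact h
    have hdlt : ∀ x, dd x - 1 < n := by
      intro x
      have h1 := hddn x
      have h2 := hdd1 x
      omega
    set piv : (Fin n → X) → X := fun x => x (τ x ⟨dd x - 1, hdlt x⟩) with hpivdef
    set AA : (Fin n → X) → Set (Fin n) := fun x => π '' P x (dd x) with hAAdef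
    set vv : (Fin n → X) → X := fun x => M (P x (dd x - 1)) (piv x) with hvvdef
    set u : Fin n → (Fin n → X) → X := fun i x => T (AA x) (vv x) i with hudef
    have hAAw : ∀ x, Wild g (AA x) := fun x => hπ _ (hddW x)
    -- domination
    have hdom : ∀ x, f x ≤ g (fun i => u i x) := by
      intro x
      have hBnw : ¬ Wild f (P x (dd x - 1)) :=
        Nat.find_min (hex x) (show dd x - 1 < dd x by have := hdd1 x; omega)
      have h1 : f x ≤ vv x := by
        refine hM _ _ hBnw x ?_
        intro i hi
        have hi' : ¬ (((τ x).symm i : Fin n) : ℕ) < dd x - 1 := by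
          intro hlt
          exact hi ⟨(τ x).symm i, hlt, Equiv.apply_symm_apply _ i⟩
        have hle : (⟨dd x - 1, hdlt x⟩ : Fin n) ≤ (τ x).symm i := by
          rw [Fin.le_def]
          exact not_lt.mp hi'
        have hmm := hmono x _ _ hle
        rwa [Equiv.apply_symm_apply] at hmm
      have h2 : vv x ≤ g (T (AA x) (vv x)) := (hT (AA x) (hAAw x) (vv x)).2
      exact h1.trans h2
    -- almost unarity
    have hau : ∀ i : Fin n, AlmostUnary (u i) := by
      intro i
      have hpiece : ∀ (A B : Set (Fin n)) (t : X), ∃ b : X,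
          ∀ s : X, s ≤ t → T A (M B s) i ≤ b := by
        intro A B t
        have hsm : #((fun s : X => T A (M B s) i) '' {s : X | s ≤ t}) < #X :=
          lt_of_le_of_lt Cardinal.mk_image_le (aux_le_small hbdd t)
        exact ⟨ub _, fun s hs => hub _ hsm _ ⟨s, hs, rfl⟩⟩
      choose pb hpb using hpiece
      have hfinex : ∀ t : X, ∃ b : X,
          (∀ A B : Set (Fin n), pb A B t ≤ b) ∧ (∀ A : Set (Fin n), wit A i ≤ b) := by
        intro t
        have hfin1 : (({y : X | ∃ A B : Set (Fin n), y = pb A B t} ∪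
            {y : X | ∃ A : Set (Fin n), y = wit A i}) : Set X).Finite := by
          apply Set.Finite.union
          · refine (Set.finite_range
              (fun p : Set (Fin n) × Set (Fin n) => pb p.1 p.2 t)).subset ?_
            rintro y ⟨A, B, rfl⟩
            exact ⟨(A, B), rfl⟩
          · refine (Set.finite_range (fun A : Set (Fin n) => wit A i)).subset ?_
            rintro y ⟨A, rfl⟩
            exact ⟨A, rfl⟩
        have hsm : #(({y : X | ∃ A B : Set (Fin n), y = pb A B t} ∪
            {y : X | ∃ A : Set (Fin n), y = wit A i}) : Set X) < #X :=
          lt_of_lt_of_le hfin1.lt_aleph0 hinf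
        exact ⟨ub _, fun A B => hub _ hsm _ (Or.inl ⟨A, B, rfl⟩),
          fun A => hub _ hsm _ (Or.inr ⟨A, rfl⟩)⟩
      choose bigb hbigb using hfinex
      refine ⟨π.symm i, fun t => succ (bigb t), ?_⟩
      intro x
      have hfinal : u i x ≤ bigb (x (π.symm i)) := by
        by_cases hmem : i ∈ AA x
        · obtain ⟨j, hj, hji⟩ := hmem
          obtain ⟨r, hr, hrj⟩ := hj
          have hk : π.symm i = j := by rw [← hji]; simp
          have hle : piv x ≤ x (π.symm i) := by
            rw [hk, ← hrj]
            refine hmono x r ⟨dd x - 1, hdlt x⟩ ?_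
            show (r : ℕ) ≤ dd x - 1
            simp only [Set.mem_setOf_eq] at hr
            have := hdd1 x
            omega
          calc u i x = T (AA x) (M (P x (dd x - 1)) (piv x)) i := rfl
            _ ≤ pb (AA x) (P x (dd x - 1)) (x (π.symm i)) :=
                hpb (AA x) _ (x (π.symm i)) (piv x) hle
            _ ≤ bigb (x (π.symm i)) := (hbigb (x (π.symm i))).1 _ _
        · have heq : u i x = wit (AA x) i := (hT (AA x) (hAAw x) (vv x)).1 i hmem
          rw [heq]
          exact (hbigb (x (π.symm i))).2 _
      exact lt_of_le_of_lt hfinal (hsucc _)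
    refine ⟨fun x => g (fun i => u i x), ?_, hdom⟩
    intro C hC hUau hg
    exact hC.comp n n g u hg (fun i => hUau n (u i) (hau i))
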